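/- Let u ∈ H and set p = −(Bu + f_f) ∈ Q. Then for every v_N ∈ H, 4‖(D − D_M)v_N − (l − l_M)‖_H² ≤ 24‖u − v_N‖_H² + 12·inf_{q ∈ W} ‖p − q‖_Q². -/
import Mathlib


open scoped RealInnerProductSpace

/-- Consistency-error estimate: with `p = −(Bu + f_f)`,
`4‖(D − D_M)v_N − (l − l_M)‖² ≤ 24‖u − v_N‖² + 12·inf_{q ∈ W}‖p − q‖²`. -/
theorem stmt_13 {H Q : Type*}
    [NormedAddCommGroup H] [InnerProductSpace ℝ H] [CompleteSpace H]
    [NormedAddCommGroup Q] [InnerProductSpace ℝ Q] [CompleteSpace Q]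
    (B : H →L[ℝ] Q) (hB : ‖B‖ ≤ 1)
    (f_e : H) (f_f : Q)
    (W : Submodule ℝ Q) (hW_cl : IsClosed (W : Set Q))
    (P : Q →L[ℝ] Q) (hP : ∀ x : Q, P x ∈ W ∧ x - P x ∈ Wᗮ)
    (D D_M : H →L[ℝ] H) (l l_M : H)
    (hD : D = ContinuousLinearMap.id ℝ H + (ContinuousLinearMap.adjoint B).comp B)
    (hDM : D_M = ContinuousLinearMap.id ℝ H + (ContinuousLinearMap.adjoint B).comp (P.comp B))
    (hl : l = f_e - ContinuousLinearMap.adjoint B f_f)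
    (hlM : l_M = f_e - ContinuousLinearMap.adjoint B (P f_f))
    (u : H) (p : Q) (hp : p = -(B u + f_f)) :
    ∀ v_N : H,
      4 * ‖(D - D_M) v_N - (l - l_M)‖ ^ 2 ≤
        24 * ‖u - v_N‖ ^ 2 + 12 * ⨅ q : W, ‖p - (q : Q)‖ ^ 2 := by
  intro v_N
  -- contraction property of the orthogonal projection
  have hcontr : ∀ y : Q, ‖y - P y‖ ≤ ‖y‖ := by
    intro y
    obtain ⟨h1, h2⟩ := hP y
    have hinner : ⟪P y, y - P y⟫ = 0 := h2 (P y) h1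
    have hsq : ‖y‖ ^ 2 = ‖P y‖ ^ 2 + ‖y - P y‖ ^ 2 := by
      have key : ‖P y + (y - P y)‖ ^ 2 = ‖P y‖ ^ 2 + 2 * ⟪P y, y - P y⟫ + ‖y - P y‖ ^ 2 :=
        norm_add_sq_real _ _
      rw [hinner, add_sub_cancel] at key
      linarith
    nlinarith [norm_nonneg (y - P y), norm_nonneg y, norm_nonneg (P y)]
  -- norm of adjoint
  have hBadj : ‖ContinuousLinearMap.adjoint B‖ ≤ 1 := by
    rw [LinearIsometryEquiv.norm_map]; exact hB
  -- rewrite the expression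
  have hx : (D - D_M) v_N - (l - l_M)
      = ContinuousLinearMap.adjoint B ((B v_N + f_f) - P (B v_N + f_f)) := by
    subst hD hDM hl hlM
    simp only [ContinuousLinearMap.sub_apply, ContinuousLinearMap.add_apply,
      ContinuousLinearMap.coe_id', id_eq, ContinuousLinearMap.comp_apply,
      map_add, map_sub]
    abel
  set b := ‖p - P p‖ with hb
  have hbe : b = ‖p - P p‖ := rfl
  -- bound on the expression
  have hbound : ‖(D - D_M) v_N - (l - l_M)‖ ≤ ‖u - v_N‖ + b := by
    rw [hx]
    have h1 : ‖ContinuousLinearMap.adjoint B ((B v_N + f_f) - P (B v_N + f_f))‖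
        ≤ ‖(B v_N + f_f) - P (B v_N + f_f)‖ := by
      calc ‖ContinuousLinearMap.adjoint B ((B v_N + f_f) - P (B v_N + f_f))‖
          ≤ ‖ContinuousLinearMap.adjoint B‖ * ‖(B v_N + f_f) - P (B v_N + f_f)‖ :=
            (ContinuousLinearMap.adjoint B).le_opNorm _
        _ ≤ 1 * ‖(B v_N + f_f) - P (B v_N + f_f)‖ := by
            apply mul_le_mul_of_nonneg_right hBadj (norm_nonneg _)
        _ = _ := one_mul _
    have hy : B v_N + f_f = B (v_N - u) - p := by
      rw [hp, map_sub]; abel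
    have h2 : (B v_N + f_f) - P (B v_N + f_f)
        = (B (v_N - u) - P (B (v_N - u))) - (p - P p) := by
      rw [hy, map_sub P (B (v_N - u)) p]; abel
    have h3 : ‖(B v_N + f_f) - P (B v_N + f_f)‖ ≤ ‖B (v_N - u)‖ + b := by
      rw [h2]
      calc ‖(B (v_N - u) - P (B (v_N - u))) - (p - P p)‖
          ≤ ‖B (v_N - u) - P (B (v_N - u))‖ + ‖p - P p‖ := norm_sub_le _ _
        _ ≤ ‖B (v_N - u)‖ + b := by
            exact add_le_add (hcontr _) le_rfl
    have h4 : ‖B (v_N - u)‖ ≤ ‖u - v_N‖ := by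
      calc ‖B (v_N - u)‖ ≤ ‖B‖ * ‖v_N - u‖ := B.le_opNorm _
        _ ≤ 1 * ‖v_N - u‖ := mul_le_mul_of_nonneg_right hB (norm_nonneg _)
        _ = ‖u - v_N‖ := by rw [one_mul, norm_sub_rev]
    linarith
  -- b² is a lower bound of the infimum
  have hWne : Nonempty W := ⟨⟨0, W.zero_mem⟩⟩
  have hinf : b ^ 2 ≤ ⨅ q : W, ‖p - (q : Q)‖ ^ 2 := by
    apply le_ciInf
    intro q
    obtain ⟨h1, h2⟩ := hP p
    have hm : P p - (q : Q) ∈ W := W.sub_mem h1 q.2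
    have hinner : ⟪P p - (q : Q), p - P p⟫ = 0 := h2 _ hm
    have hsplit : p - (q : Q) = (p - P p) + (P p - (q : Q)) := by abel
    rw [hsplit, norm_add_sq_real, real_inner_comm, hinner]
    nlinarith [norm_nonneg (P p - (q : Q))]
  have hbnn : 0 ≤ b := norm_nonneg _
  have hnn : 0 ≤ ‖(D - D_M) v_N - (l - l_M)‖ := norm_nonneg _
  have hann : 0 ≤ ‖u - v_N‖ := norm_nonneg _
  nlinarith [sq_nonneg (‖u - v_N‖ - b), sq_nonneg (‖u - v_N‖ + b)]
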